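/- Let k be a finite field and let A be a nonzero finite étale k-algebra, i.e. a k-algebra isomorphic to a finite product of finite field extensions of k. Then there exists a surjective k-algebra homomorphism k[t] → A if and only if for every finite field extension l of k, the number of maximal ideals m of A such that the residue field A/m is isomorphic to l as a k-algebra is at most the number of monic irreducible polynomials of degree [l : k] in k[X]. -/

import Mathlib

open Polynomial Module

namespace Stmt7Aux

variable (k : Type) [Field k] [Fintype k]

lemma polySetFinite (n : ℕ) :
    {f : Polynomial k | f.Monic ∧ Irreducible f ∧ f.natDegree = n}.Finite := by
  have h1 : {f : Polynomial k | f.natDegree = n}.Finite := by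
    refine Set.Finite.of_finite_image (f := fun f => fun i : Fin (n + 1) => f.coeff i)
      (Set.toFinite _) ?_
    intro f hf g hg hfg
    apply Polynomial.ext
    intro i
    by_cases hi : i < n + 1
    · exact congrFun hfg ⟨i, hi⟩
    · push_neg at hi
      rw [Set.mem_setOf_eq] at hf hg
      rw [Polynomial.coeff_eq_zero_of_natDegree_lt (by omega),
        Polynomial.coeff_eq_zero_of_natDegree_lt (by omega)]
  exact h1.subset fun f hf => hf.2.2

lemma iso_of_finrank_eq (l₁ l₂ : Type) [Field l₁] [Field l₂] [Algebra k l₁] [Algebra k l₂]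
    [FiniteDimensional k l₁] [FiniteDimensional k l₂]
    (h : Module.finrank k l₁ = Module.finrank k l₂) : Nonempty (l₁ ≃ₐ[k] l₂) := by
  haveI : Finite l₁ := Module.finite_of_finite k
  haveI : Finite l₂ := Module.finite_of_finite k
  haveI : Fintype l₁ := Fintype.ofFinite _
  haveI : Fintype l₂ := Fintype.ofFinite _
  have hc : Fintype.card l₂ = Fintype.card l₁ := by
    rw [card_eq_pow_finrank (K := k) (V := l₂), card_eq_pow_finrank (K := k) (V := l₁), h]
  haveI : IsSplittingField k l₂ ((X : k[X]) ^ Fintype.card l₁ - X) := by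
    rw [← hc]; exact FiniteField.isSplittingField_sub l₂ k
  exact ⟨(IsSplittingField.algEquiv l₁ ((X : k[X]) ^ Fintype.card l₁ - X)).trans
    (IsSplittingField.algEquiv l₂ ((X : k[X]) ^ Fintype.card l₁ - X)).symm⟩

lemma finrank_quot_span (p : Polynomial k) (hp : p ≠ 0) :
    Module.finrank k (Polynomial k ⧸ Ideal.span {p}) = p.natDegree := by
  have h := (AdjoinRoot.powerBasis hp).finrank
  have h2 : Module.finrank k (AdjoinRoot p) = p.natDegree := by
    simpa [AdjoinRoot.powerBasis] using h
  exact h2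

lemma finiteDimensional_quot_span (p : Polynomial k) (hp : p ≠ 0) :
    FiniteDimensional k (Polynomial k ⧸ Ideal.span {p}) :=
  (AdjoinRoot.powerBasis hp).finite

lemma forward (A : Type) [CommRing A] [Algebra k A] [FiniteDimensional k A]
    (φ : Polynomial k →ₐ[k] A) (hφ : Function.Surjective φ)
    (l : Type) [Field l] [Algebra k l] [FiniteDimensional k l] :
    {m : Ideal A | m.IsMaximal ∧ Nonempty ((A ⧸ m) ≃ₐ[k] l)}.ncard ≤
      {f : Polynomial k | f.Monic ∧ Irreducible f ∧
        f.natDegree = Module.finrank k l}.ncard := by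
  classical
  have hspan : ∀ m : Ideal A,
      Ideal.span {normalize (Submodule.IsPrincipal.generator (Ideal.comap φ m))} =
        Ideal.comap φ m := by
    intro m
    rw [Ideal.span_singleton_eq_span_singleton.mpr (normalize_associated _),
      Ideal.span_singleton_generator]
  refine Set.ncard_le_ncard_of_injOn
    (fun m => normalize (Submodule.IsPrincipal.generator (Ideal.comap φ m))) ?_ ?_
    (polySetFinite k _)
  · rintro m ⟨hm, ⟨e⟩⟩
    haveI := hm
    haveI hJmax : (Ideal.comap φ m).IsMaximal := Ideal.comap_isMaximal_of_surjective φ hφ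
    have hJbot : Ideal.comap φ m ≠ ⊥ := by
      intro hbot
      have hco : IsCoatom (⊥ : Ideal (Polynomial k)) := (hbot ▸ hJmax).out
      refine Polynomial.not_isField k ⟨⟨0, 1, zero_ne_one⟩, mul_comm, ?_⟩
      intro a ha
      have hsp : Ideal.span {a} = ⊤ := hco.2 _ (bot_lt_iff_ne_bot.mpr (by
        simpa [Ideal.span_singleton_eq_bot] using ha))
      exact (Ideal.span_singleton_eq_top.mp hsp).exists_right_inv
    have hg0 : Submodule.IsPrincipal.generator (Ideal.comap φ m) ≠ 0 := fun h =>
      hJbot ((Submodule.IsPrincipal.eq_bot_iff_generator_eq_zero _).mpr h)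
    haveI := hJmax.isPrime
    have hprime : Prime (Submodule.IsPrincipal.generator (Ideal.comap φ m)) :=
      Submodule.IsPrincipal.prime_generator_of_isPrime _ hJbot
    have hmon : (normalize (Submodule.IsPrincipal.generator (Ideal.comap φ m))).Monic :=
      Polynomial.monic_normalize hg0
    have hψ : Function.Surjective ((Ideal.Quotient.mkₐ k m).comp φ) :=
      (Ideal.Quotient.mkₐ_surjective k m).comp hφ
    have hker : RingHom.ker ((Ideal.Quotient.mkₐ k m).comp φ) = Ideal.comap φ m := by
      ext x
      simp [RingHom.mem_ker, Ideal.Quotient.eq_zero_iff_mem, Ideal.mem_comap]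
    have e1 : (Polynomial k ⧸ Ideal.comap φ m) ≃ₐ[k] (A ⧸ m) :=
      hker ▸ Ideal.quotientKerAlgEquivOfSurjective hψ
    have hfr : Module.finrank k (Polynomial k ⧸ Ideal.comap φ m) = Module.finrank k l :=
      (e1.trans e).toLinearEquiv.finrank_eq
    refine ⟨hmon, (associated_normalize _).irreducible hprime.irreducible, ?_⟩
    calc (normalize (Submodule.IsPrincipal.generator (Ideal.comap φ m))).natDegree
        = Module.finrank k (Polynomial k ⧸
            Ideal.span {normalize (Submodule.IsPrincipal.generator (Ideal.comap φ m))}) :=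
          (finrank_quot_span k _ hmon.ne_zero).symm
      _ = Module.finrank k (Polynomial k ⧸ Ideal.comap φ m) := by rw [hspan m]
      _ = Module.finrank k l := hfr
  · intro m1 hm1 m2 hm2 heq
    have hsp2 : Ideal.span {normalize (Submodule.IsPrincipal.generator (Ideal.comap φ m1))} =
        Ideal.span {normalize (Submodule.IsPrincipal.generator (Ideal.comap φ m2))} :=
      congrArg (fun p : Polynomial k => Ideal.span {p}) heq
    have : Ideal.comap φ m1 = Ideal.comap φ m2 := by
      rw [← hspan m1, ← hspan m2]; exact hsp2
    exact Ideal.comap_injective_of_surjective φ hφ this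

lemma backward (A : Type) [CommRing A] [Algebra k A] [Nontrivial A] [FiniteDimensional k A]
    [IsReduced A]
    (h : ∀ (l : Type) [Field l] [Algebra k l] [FiniteDimensional k l],
        {m : Ideal A | m.IsMaximal ∧ Nonempty ((A ⧸ m) ≃ₐ[k] l)}.ncard ≤
          {f : Polynomial k | f.Monic ∧ Irreducible f ∧
            f.natDegree = Module.finrank k l}.ncard) :
    ∃ φ : Polynomial k →ₐ[k] A, Function.Surjective φ := by
  classical
  haveI : IsArtinianRing A := isArtinian_of_tower k inferInstance
  haveI : Finite {I : Ideal A | I.IsMaximal} :=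
    (IsArtinianRing.setOfPred_isMaximal_finite A).to_subtype
  -- step 1: per degree injections from maximal ideals to monic irreducible polynomials
  have key : ∀ n : ℕ, ∃ g : Ideal A → Polynomial k,
      Set.InjOn g {m : Ideal A | m.IsMaximal ∧ Module.finrank k (A ⧸ m) = n} ∧
      ∀ m ∈ {m : Ideal A | m.IsMaximal ∧ Module.finrank k (A ⧸ m) = n},
        (g m).Monic ∧ Irreducible (g m) ∧ (g m).natDegree = n := by
    intro n
    by_cases hn : ∃ m0 : Ideal A, m0.IsMaximal ∧ Module.finrank k (A ⧸ m0) = n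
    · obtain ⟨m0, hm0, hd0⟩ := hn
      haveI := hm0
      letI : Field (A ⧸ m0) := Ideal.Quotient.field m0
      have hcard := h (A ⧸ m0)
      have hsets : {m : Ideal A | m.IsMaximal ∧ Nonempty ((A ⧸ m) ≃ₐ[k] (A ⧸ m0))}
          = {m : Ideal A | m.IsMaximal ∧ Module.finrank k (A ⧸ m) = n} := by
        ext m
        simp only [Set.mem_setOf_eq, and_congr_right_iff]
        intro hm
        haveI := hm
        letI : Field (A ⧸ m) := Ideal.Quotient.field m
        constructor
        · rintro ⟨e⟩; rw [← hd0]; exact e.toLinearEquiv.finrank_eq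
        · intro hdm; exact iso_of_finrank_eq k _ _ (hdm.trans hd0.symm)
      rw [hsets, hd0] at hcard
      have hs : {m : Ideal A | m.IsMaximal ∧ Module.finrank k (A ⧸ m) = n}.Finite :=
        (IsArtinianRing.setOfPred_isMaximal_finite A).subset fun m hm => hm.1
      have ht := polySetFinite k n
      haveI := hs.fintype
      haveI := ht.fintype
      have hle : Fintype.card {m : Ideal A | m.IsMaximal ∧ Module.finrank k (A ⧸ m) = n} ≤
          Fintype.card {f : Polynomial k | f.Monic ∧ Irreducible f ∧ f.natDegree = n} := by
        rwa [← Nat.card_coe_set_eq, ← Nat.card_coe_set_eq,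
          Nat.card_eq_fintype_card, Nat.card_eq_fintype_card] at hcard
      obtain ⟨e⟩ := Function.Embedding.nonempty_of_card_le hle
      refine ⟨fun m => if hm : m.IsMaximal ∧ Module.finrank k (A ⧸ m) = n then
        (e ⟨m, hm⟩ : Polynomial k) else 1, ?_, ?_⟩
      · intro a ha b hb hab
        rw [Set.mem_setOf_eq] at ha hb
        beta_reduce at hab
        rw [dif_pos ha, dif_pos hb] at hab
        have := e.injective (Subtype.ext hab)
        simpa using congrArg Subtype.val this
      · intro m hm
        rw [Set.mem_setOf_eq] at hm
        beta_reduce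
        rw [dif_pos hm]
        exact (e ⟨m, hm⟩).2
    · exact ⟨fun _ => 1, fun a ha => absurd ⟨a, ha.1, ha.2⟩ hn,
        fun m hm => absurd ⟨m, hm.1, hm.2⟩ hn⟩
  choose g hginj hgmem using key
  set Ψ : Ideal A → Polynomial k := fun m => g (Module.finrank k (A ⧸ m)) m with hΨdef
  have hΨmem : ∀ m : Ideal A, m.IsMaximal →
      (Ψ m).Monic ∧ Irreducible (Ψ m) ∧ (Ψ m).natDegree = Module.finrank k (A ⧸ m) :=
    fun m hm => hgmem _ m ⟨hm, rfl⟩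
  have hΨinj : ∀ m1 m2 : Ideal A, m1.IsMaximal → m2.IsMaximal → Ψ m1 = Ψ m2 → m1 = m2 := by
    intro m1 m2 h1 h2 heq
    have hd : Module.finrank k (A ⧸ m2) = Module.finrank k (A ⧸ m1) := by
      rw [← (hΨmem m1 h1).2.2, ← (hΨmem m2 h2).2.2, heq]
    have heq2 : g (Module.finrank k (A ⧸ m1)) m1 = g (Module.finrank k (A ⧸ m1)) m2 := by
      have : Ψ m2 = g (Module.finrank k (A ⧸ m1)) m2 := by rw [hΨdef]; simp only; rw [hd]
      rw [← this, ← heq]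
    exact hginj _ ⟨h1, rfl⟩ ⟨h2, hd⟩ heq2
  -- step 2: Chinese remainder
  set S := {I : Ideal A | I.IsMaximal} with hSdef
  have hpmax : ∀ I : S, (Ideal.span {Ψ I.1}).IsMaximal := fun I =>
    PrincipalIdealRing.isMaximal_of_irreducible (hΨmem I.1 I.2).2.1
  have hpne : ∀ I J : S, I ≠ J → Ideal.span {Ψ I.1} ≠ Ideal.span {Ψ J.1} := by
    intro I J hIJ hsp
    exact hIJ (Subtype.ext (hΨinj _ _ I.2 J.2
      (Polynomial.eq_of_monic_of_associated (hΨmem I.1 I.2).1 (hΨmem J.1 J.2).1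
        (Ideal.span_singleton_eq_span_singleton.mp hsp))))
  have hcop : Pairwise (Function.onFun IsCoprime fun I : S => Ideal.span {Ψ I.1}) := fun I J hIJ =>
    Ideal.isCoprime_iff_sup_eq.mpr ((hpmax I).coprime_of_ne (hpmax J) (hpne I J hIJ))
  have hsurj1 : Function.Surjective
      (fun x : Polynomial k => fun I : S => Ideal.Quotient.mk (Ideal.span {Ψ I.1}) x) := by
    intro y
    obtain ⟨z, hz⟩ := Ideal.quotientInfToPiQuotient_surj hcop y
    obtain ⟨x, rfl⟩ := Ideal.Quotient.mk_surjective z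
    refine ⟨x, ?_⟩
    have hmk := Ideal.quotientInfToPiQuotient_mk (fun I : S => Ideal.span {Ψ I.1}) x
    rw [hmk] at hz
    exact hz
  have hiso : ∀ I : S, Nonempty ((Polynomial k ⧸ Ideal.span {Ψ I.1}) ≃ₐ[k] (A ⧸ I.1)) := by
    intro I
    haveI : I.1.IsMaximal := I.2
    letI : Field (A ⧸ I.1) := Ideal.Quotient.field I.1
    haveI := hpmax I
    letI : Field (Polynomial k ⧸ Ideal.span {Ψ I.1}) := Ideal.Quotient.field _
    haveI : FiniteDimensional k (Polynomial k ⧸ Ideal.span {Ψ I.1}) :=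
      finiteDimensional_quot_span k _ (hΨmem I.1 I.2).1.ne_zero
    refine iso_of_finrank_eq k _ _ ?_
    rw [finrank_quot_span k _ (hΨmem I.1 I.2).1.ne_zero, (hΨmem I.1 I.2).2.2]
  have χ : ∀ I : S, (Polynomial k ⧸ Ideal.span {Ψ I.1}) ≃ₐ[k] (A ⧸ I.1) :=
    fun I => (hiso I).some
  let Φ : Polynomial k →ₐ[k] ∀ I : S, A ⧸ I.1 :=
    Pi.algHom _ _ (fun I => (χ I).toAlgHom.comp (Ideal.Quotient.mkₐ k (Ideal.span {Ψ I.1})))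
  have hΦ : Function.Surjective Φ := by
    intro y
    obtain ⟨x, hx⟩ := hsurj1 (fun I => (χ I).symm (y I))
    refine ⟨x, funext fun I => ?_⟩
    have hxI := congrFun hx I
    simp only at hxI
    show (χ I) (Ideal.Quotient.mkₐ k (Ideal.span {Ψ I.1}) x) = y I
    rw [Ideal.Quotient.mkₐ_eq_mk, hxI, AlgEquiv.apply_symm_apply]
  let π : A →ₐ[k] ∀ I : S, A ⧸ I.1 := Pi.algHom _ _ (fun I => Ideal.Quotient.mkₐ k I.1)
  have hπinj : Function.Injective π := by
    rw [injective_iff_map_eq_zero]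
    intro a ha
    have hmem : ∀ I : S, a ∈ I.1 := fun I => by
      have := congrFun ha I
      simpa [π, Ideal.Quotient.eq_zero_iff_mem] using this
    have hnil : a ∈ nilradical A := by
      rw [nilradical_eq_sInf, Ideal.mem_sInf]
      intro J hJ
      exact hmem ⟨J, (IsArtinianRing.isPrime_iff_isMaximal J).mp hJ⟩
    rw [nilradical_eq_zero] at hnil
    simpa using hnil
  have hπsurj : Function.Surjective π := by
    have hcop' : Pairwise (Function.onFun IsCoprime fun I : S => I.1) := by
      intro I J hIJ
      have hI : I.1.IsMaximal := I.2
      have hJ : J.1.IsMaximal := J.2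
      exact Ideal.isCoprime_iff_sup_eq.mpr (hI.coprime_of_ne hJ fun hh => hIJ (Subtype.ext hh))
    intro y
    obtain ⟨z, hz⟩ := Ideal.quotientInfToPiQuotient_surj hcop' y
    obtain ⟨x, rfl⟩ := Ideal.Quotient.mk_surjective z
    refine ⟨x, funext fun I => ?_⟩
    have := congrFun ((Ideal.quotientInfToPiQuotient_mk (fun I : S => I.1) x).symm.trans hz) I
    simpa [π] using this
  let e := AlgEquiv.ofBijective π ⟨hπinj, hπsurj⟩
  refine ⟨(e.symm : (∀ I : S, A ⧸ I.1) ≃ₐ[k] A).toAlgHom.comp Φ, ?_⟩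
  intro a
  obtain ⟨x, hx⟩ := hΦ (e a)
  exact ⟨x, by simp [hx]⟩

end Stmt7Aux

/-- The embeddability criterion for finite étale schemes over a finite field into the
affine line: a nonzero finite étale `k`-algebra `A` (equivalently, a nonzero
finite-dimensional reduced commutative `k`-algebra) admits a surjective `k`-algebra
homomorphism `k[t] → A` if and only if for every finite field extension `l/k`, the
number of maximal ideals of `A` with residue field `l` is at most the number of monic
irreducible polynomials of degree `[l : k]` in `k[X]`. -/
theorem stmt_7 (k : Type) [Field k] [Fintype k] (A : Type) [CommRing A]
    [Algebra k A] [Nontrivial A] [FiniteDimensional k A] [IsReduced A] :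
    (∃ φ : Polynomial k →ₐ[k] A, Function.Surjective φ) ↔
      ∀ (l : Type) [Field l] [Algebra k l] [FiniteDimensional k l],
        {m : Ideal A | m.IsMaximal ∧ Nonempty ((A ⧸ m) ≃ₐ[k] l)}.ncard ≤
          {f : Polynomial k | f.Monic ∧ Irreducible f ∧
            f.natDegree = Module.finrank k l}.ncard := by
  constructor
  · rintro ⟨φ, hφ⟩ l _ _ _
    exact Stmt7Aux.forward k A φ hφ l
  · intro h
    exact Stmt7Aux.backward k A h
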